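/- arXiv:2410.08640 — 2 statements merged into one kernel-verified Lean document; each statement's English description precedes it below -/
import Mathlib

section
/- Let 𝒳 ⊆ Φ be an almost parabolic set of roots, and for β,γ ∈ 𝒳 let m_{β,γ} denote the order of the element r_β·r_γ in W. Then M_𝒳 = (m_{β,γ})_{β,γ∈𝒳} is a Coxeter matrix on 𝒳 (m_{β,β} = 1, m_{β,γ} = m_{γ,β} ≥ 2 for β ≠ γ), and the group homomorphism from the abstract Coxeter group with presentation ⟨q_β, β ∈ 𝒳 | q_β² = 1 for all β, (q_β q_γ)^{m_{β,γ}} = 1 for β ≠ γ with m_{β,γ} ≠ ∞⟩ to W determined by q_β ↦ r_β is injective with image W_𝒳; in other words, (W_𝒳, R_𝒳) is a Coxeter system with Coxeter matrix M_𝒳. -/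
/-!
Context: `(W, S)` is a Coxeter system for the Coxeter matrix `M` (Mathlib's convention:
the entry `0` encodes `∞`).  `V = ⊕_{s ∈ S} ℝ·α_s` is realized as `S →₀ ℝ` with
`α_s = simpleRoot s`, equipped with the canonical symmetric bilinear form `bform M`.
The canonical faithful form-preserving representation `ρ : W →* GL(V)` and the map
`β ↦ r_β` assigning to each root its reflection are given as data, characterized by
the usual formulas (`hρ`, `hρinj`, `hρform`, `hr` below).
-/

noncomputable section

open scoped Real Pointwise

variable {S W : Type*}

/-- The simple root `α_s`. -/
def simpleRoot (s : S) : S →₀ ℝ := Finsupp.single s 1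

/-- The entry `⟨α_s, α_t⟩ = -cos (π / m_{s,t})` of the canonical bilinear form,
interpreted as `-1` when `m_{s,t} = ∞` (encoded by `0`). -/
def formEntry (M : CoxeterMatrix S) (s t : S) : ℝ :=
  if M s t = 0 then -1 else -Real.cos (Real.pi / (M s t : ℝ))

/-- The canonical symmetric bilinear form on `V = ⊕_{s ∈ S} ℝ·α_s`. -/
def bform (M : CoxeterMatrix S) : (S →₀ ℝ) →ₗ[ℝ] (S →₀ ℝ) →ₗ[ℝ] ℝ :=
  Finsupp.basisSingleOne.constr ℝ fun s =>
    Finsupp.basisSingleOne.constr ℝ fun t => formEntry M s t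

variable [Group W]

/-- The root system `Φ = { w (α_s) : w ∈ W, s ∈ S }`. -/
def rootSystem (ρ : W →* ((S →₀ ℝ) ≃ₗ[ℝ] (S →₀ ℝ))) : Set (S →₀ ℝ) :=
  Set.range fun p : W × S => ρ p.1 (simpleRoot p.2)

/-- A subset `𝒳 ⊆ V` is almost parabolic (AP): (AP1) the vectors of `𝒳` are linearly
independent, and (AP2) any two elements of `𝒳` are of the form `w (α_s)`, `w (α_t)` for a
common `w ∈ W`. -/
def IsAP (ρ : W →* ((S →₀ ℝ) ≃ₗ[ℝ] (S →₀ ℝ))) (𝒳 : Set (S →₀ ℝ)) : Prop :=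
  LinearIndependent ℝ ((↑) : 𝒳 → (S →₀ ℝ)) ∧
    ∀ β ∈ 𝒳, ∀ γ ∈ 𝒳, ∃ (w : W) (s t : S),
      ρ w (simpleRoot s) = β ∧ ρ w (simpleRoot t) = γ

/-- `g ∈ W` is a product of `n` elements of `T`. -/
def HasLen (T : Set W) (g : W) (n : ℕ) : Prop :=
  ∃ l : List W, (∀ x ∈ l, x ∈ T) ∧ l.prod = g ∧ l.length = n

/-- `u` has minimal word length (w.r.t. the generating set `T`) in the coset `u·H`. -/
def MinimalInCoset (T : Set W) (H : Subgroup W) (u : W) : Prop :=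
  ∀ h ∈ H, ∀ m, HasLen T (u * h) m → ∃ n ≤ m, HasLen T u n


/-! ### Auxiliary: Chebyshev-like sequences and trigonometry -/

open Real in
/-- `useq a n = sin (n θ) / sin θ` when `a = cos θ`. -/
def useq (a : ℝ) : ℕ → ℝ
  | 0 => 0
  | 1 => 1
  | (n+2) => 2*a*useq a (n+1) - useq a n

@[simp] lemma useq_zero (a : ℝ) : useq a 0 = 0 := rfl
@[simp] lemma useq_one' (a : ℝ) : useq a 1 = 1 := rfl
lemma useq_rec (a : ℝ) (n : ℕ) : useq a (n+2) = 2*a*useq a (n+1) - useq a n := rfl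

lemma useq_linear (n : ℕ) : useq 1 n = n := by
  induction n using Nat.twoStepInduction with
  | zero => simp
  | one => simp
  | more n ih1 ih2 => rw [useq_rec, ih1, ih2]; push_cast; ring

open Real in
lemma useq_sin {m : ℕ} (hm : 2 ≤ m) (n : ℕ) :
    useq (Real.cos (π/m)) n * Real.sin (π/m) = Real.sin (n*(π/m)) := by
  induction n using Nat.twoStepInduction with
  | zero => simp
  | one => simp
  | more n ih1 ih2 =>
      rw [useq_rec]
      have h2 : ((n+2 : ℕ) : ℝ) * (π/m) = (n+1 : ℕ) * (π/m) + π/m := by push_cast; ring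
      have h0 : ((n : ℕ) : ℝ) * (π/m) = (n+1 : ℕ) * (π/m) - π/m := by push_cast; ring
      rw [h2, Real.sin_add, ← ih2]
      have h3 : Real.sin ((n:ℕ) * (π/m)) =
          useq (Real.cos (π/m)) (n+1) * Real.sin (π/m) * Real.cos (π/m)
            - Real.cos (((n+1:ℕ):ℝ) * (π/m)) * Real.sin (π/m) := by
        rw [h0, Real.sin_sub, ← ih2]
      linear_combination -ih1 - h3

open Real in
lemma theta_pos {m : ℕ} (hm : 2 ≤ m) : 0 < π/m :=
  div_pos Real.pi_pos (by positivity)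

open Real in
lemma theta_lt_pi {m : ℕ} (hm : 2 ≤ m) : π/m < π := by
  have : (1:ℝ) < m := by exact_mod_cast hm.trans_lt' one_lt_two
  calc π/m < π/1 := by
        apply div_lt_div_of_pos_left Real.pi_pos one_pos this
    _ = π := by ring

open Real in
lemma sin_theta_pos {m : ℕ} (hm : 2 ≤ m) : 0 < Real.sin (π/m) :=
  Real.sin_pos_of_pos_of_lt_pi (theta_pos hm) (theta_lt_pi hm)

open Real in
lemma useq_nonneg {m : ℕ} (hm : 2 ≤ m) {n : ℕ} (hn : n ≤ m) :
    0 ≤ useq (Real.cos (π/m)) n := by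
  have hs := sin_theta_pos hm
  have h := useq_sin hm n
  nlinarith [Real.sin_nonneg_of_nonneg_of_le_pi (x := n * (π/m))
    (by positivity)
    (by calc (n:ℝ) * (π/m) ≤ m * (π/m) := by
              apply mul_le_mul_of_nonneg_right _ (le_of_lt (theta_pos hm))
              exact_mod_cast hn
          _ = π := by field_simp)]

open Real in
lemma useq_eq_zero_iff {m : ℕ} (hm : 2 ≤ m) {n : ℕ} (hn1 : 0 < n) (hn2 : n < 2*m) :
    useq (Real.cos (π/m)) n = 0 ↔ n = m := by
  have hs := sin_theta_pos hm
  have h := useq_sin hm n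
  constructor
  · intro h0
    rw [h0, zero_mul] at h
    have := Real.sin_eq_zero_iff.mp h.symm
    obtain ⟨k, hk⟩ := this
    have hm0 : (0:ℝ) < m := by positivity
    have : (k : ℝ) * m = n := by
      have hπ := Real.pi_pos
      field_simp at hk
      nlinarith [hk]
    have hk1 : (k:ℝ) = (n:ℝ)/m := by field_simp at this ⊢; linarith
    have hkpos : 0 < (k:ℝ) := by rw [hk1]; positivity
    have hklt : (k:ℝ) < 2 := by
      rw [hk1]; rw [div_lt_iff₀ hm0]
      exact_mod_cast hn2
    have : k = 1 := by
      have h1 : 0 < k := by exact_mod_cast hkpos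
      have h2 : k < 2 := by exact_mod_cast hklt
      omega
    subst this
    have : (n:ℝ) = m := by simpa using this.symm
    exact_mod_cast this
  · intro h0
    subst h0
    have : (n:ℝ) * (π/n) = π := by field_simp
    rw [this] at h
    simp at h
    rcases h with h | h
    · exact h
    · linarith

open Real in
lemma useq_succ_m {m : ℕ} (hm : 2 ≤ m) : useq (Real.cos (π/m)) (m+1) = -1 := by
  have hs := sin_theta_pos hm
  have h := useq_sin hm (m+1)
  have hmm : ((m+1:ℕ):ℝ) * (π/m) = π + π/m := by
    have : (m:ℝ) ≠ 0 := by positivity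
    push_cast; field_simp
  rw [hmm] at h
  have h2 : Real.sin (π + π/m) = - Real.sin (π/m) := by
    rw [Real.sin_add]; simp
  rw [h2] at h
  nlinarith [h]

/-! ### Auxiliary: words over a two-element generating set in a group -/

section Words
variable {G : Type*} [Group G] {g h : G}

lemma hasLen_one (T : Set G) : HasLen T 1 0 := ⟨[], by simp, by simp, rfl⟩

lemma hasLen_mul_right {T : Set G} {x : G} {n : ℕ} (hx : HasLen T x n) {y : G} (hy : y ∈ T) :
    HasLen T (x*y) (n+1) := by
  obtain ⟨l, hl, hp, hn⟩ := hx
  refine ⟨l ++ [y], ?_, by simp [hp], by simp [hn]⟩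
  intro z hz
  rcases List.mem_append.mp hz with h1 | h1
  · exact hl z h1
  · simp at h1; subst h1; exact hy

lemma hasLen_mul_left {T : Set G} {x : G} {n : ℕ} (hx : HasLen T x n) {y : G} (hy : y ∈ T) :
    HasLen T (y*x) (n+1) := by
  obtain ⟨l, hl, hp, hn⟩ := hx
  refine ⟨y :: l, ?_, by simp [hp], by simp [hn]⟩
  intro z hz
  rcases List.mem_cons.mp hz with h1 | h1
  · subst h1; exact hy
  · exact hl z h1

lemma hasLen_zero {T : Set G} {x : G} (hx : HasLen T x 0) : x = 1 := by
  obtain ⟨l, hl, hp, hn⟩ := hx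
  rw [List.length_eq_zero_iff] at hn; subst hn; simpa using hp.symm

lemma inv_invol (hg : g*g = 1) : g⁻¹ = g := inv_eq_of_mul_eq_one_right hg

lemma hasLen_pow_gh (hg : g*g = 1) (hh : h*h = 1) (j : ℕ) :
    HasLen {g,h} ((g*h)^j) (2*j) := by
  induction j with
  | zero => simpa using hasLen_one _
  | succ j ih =>
      have h1 := hasLen_mul_right (hasLen_mul_right ih (by simp : g ∈ ({g,h} : Set G)))
        (by simp : h ∈ ({g,h} : Set G))
      have e : (g*h)^j * g * h = (g*h)^(j+1) := by rw [pow_succ]; group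
      have e2 : 2*(j+1) = 2*j+1+1 := by ring
      rw [e] at h1; rw [e2]; exact h1

lemma hasLen_h_pow_gh (hg : g*g = 1) (hh : h*h = 1) (j : ℕ) :
    HasLen {g,h} (h*(g*h)^j) (2*j+1) :=
  hasLen_mul_left (hasLen_pow_gh hg hh j) (by simp)

lemma hasLen_pow_hg (hg : g*g = 1) (hh : h*h = 1) (j : ℕ) :
    HasLen {g,h} ((h*g)^j) (2*j) := by
  have := hasLen_pow_gh hh hg j
  rwa [Set.pair_comm h g] at this

lemma hasLen_g_pow_hg (hg : g*g = 1) (hh : h*h = 1) (j : ℕ) :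
    HasLen {g,h} (g*(h*g)^j) (2*j+1) :=
  hasLen_mul_left (hasLen_pow_hg hg hh j) (by simp)

lemma gh_inv (hg : g*g = 1) (hh : h*h = 1) (n : ℕ) : ((g*h)^n)⁻¹ = (h*g)^n := by
  rw [← inv_pow, mul_inv_rev, inv_invol hg, inv_invol hh]

lemma I1 (j : ℕ) : g*(h*g)^j = (g*h)^j*g := by
  induction j with
  | zero => simp
  | succ j ih => rw [pow_succ, ← mul_assoc, ih, pow_succ]; group

lemma I2 (j : ℕ) : h*(g*h)^j = (h*g)^j*h := I1 j

lemma J1 (hh : h*h = 1) (j : ℕ) : (g*h)^(j+1) * h = (g*h)^j * g := by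
  rw [pow_succ, mul_assoc ((g*h)^j) (g*h) h, mul_assoc g h h, hh, mul_one]

lemma J3 (j : ℕ) : (g*(h*g)^j) * h = (g*h)^(j+1) := by
  rw [I1, mul_assoc, ← pow_succ]

lemma J5 (hg : g*g = 1) (j : ℕ) : (g*(h*g)^j) * g = (g*h)^j := by
  rw [I1, mul_assoc, hg, mul_one]

lemma minimal_word_classify (hg : g*g=1) (hh : h*h=1) :
    ∀ k x, HasLen {g,h} x k → (∀ j, HasLen {g,h} x j → k ≤ j) →
    (∃ j, k = 2*j ∧ (x = (g*h)^j ∨ x = (h*g)^j)) ∨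
    (∃ j, k = 2*j+1 ∧ (x = g*(h*g)^j ∨ x = h*(g*h)^j)) := by
  intro k
  induction k using Nat.strong_induction_on with
  | _ k IH =>
  intro x hx hmin
  match k with
  | 0 => exact Or.inl ⟨0, rfl, Or.inl (by simpa using hasLen_zero hx)⟩
  | (k'+1) =>
    obtain ⟨l, hl, hp, hn⟩ := hx
    rcases l.eq_nil_or_concat with rfl | ⟨l', y, rfl⟩
    · simp at hn
    have hy : y ∈ ({g,h} : Set G) := hl y (by simp)
    have hx' : HasLen {g,h} l'.prod k' := ⟨l', fun z hz => hl z (by simp [hz]), rfl, by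
      simpa using hn⟩
    have hxeq : x = l'.prod * y := by rw [← hp]; simp
    have hmin' : ∀ j, HasLen {g,h} l'.prod j → k' ≤ j := by
      intro j hj
      have := hmin (j+1) (by rw [hxeq]; exact hasLen_mul_right hj hy)
      omega
    have hy' : y = g ∨ y = h := by simpa using hy
    have contra : ∀ j, HasLen {g,h} x j → j < k'+1 → False := fun j hj hlt =>
      absurd (hmin j hj) (by omega)
    rcases IH k' (by omega) l'.prod hx' hmin' with ⟨j, hk', hsh⟩ | ⟨j, hk', hsh⟩
    · rcases hsh with hsh | hsh
      · -- x' = (g*h)^j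
        rcases hy' with hy1 | hy1 <;> rw [hy1] at hxeq
        · exact Or.inr ⟨j, by omega, Or.inl (by rw [hxeq, hsh, ← I1])⟩
        · match j, hk' with
          | 0, hk' => exact Or.inr ⟨0, by omega, Or.inr (by rw [hxeq, hsh]; simp)⟩
          | (j'+1), hk' =>
            exact absurd (hmin (2*j'+1)
              ((by rw [hxeq, hsh, J1 hh, ← I1] : x = g*(h*g)^j') ▸ hasLen_g_pow_hg hg hh j'))
              (by omega)
      · -- x' = (h*g)^j
        rcases hy' with hy1 | hy1 <;> rw [hy1] at hxeq
        · match j, hk' with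
          | 0, hk' => exact Or.inr ⟨0, by omega, Or.inl (by rw [hxeq, hsh]; simp)⟩
          | (j'+1), hk' =>
            exact absurd (hmin (2*j'+1)
              ((by rw [hxeq, hsh, J1 hg, ← I1] : x = h*(g*h)^j') ▸ hasLen_h_pow_gh hg hh j'))
              (by omega)
        · exact Or.inr ⟨j, by omega, Or.inr (by rw [hxeq, hsh, ← I1])⟩
    · rcases hsh with hsh | hsh
      · -- x' = g*(h*g)^j
        rcases hy' with hy1 | hy1 <;> rw [hy1] at hxeq
        · exact absurd (hmin (2*j)
            ((by rw [hxeq, hsh, J5 hg] : x = (g*h)^j) ▸ hasLen_pow_gh hg hh j)) (by omega)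
        · exact Or.inl ⟨j+1, by omega, Or.inl (by rw [hxeq, hsh, J3])⟩
      · -- x' = h*(g*h)^j
        rcases hy' with hy1 | hy1 <;> rw [hy1] at hxeq
        · exact Or.inl ⟨j+1, by omega, Or.inr (by rw [hxeq, hsh, J3])⟩
        · exact absurd (hmin (2*j)
            ((by rw [hxeq, hsh, J5 hh] : x = (h*g)^j) ▸ hasLen_pow_hg hg hh j)) (by omega)

lemma hg_rel (hg : g*g = 1) (hh : h*h = 1) {m : ℕ} (hrel : (g*h)^m = 1) : (h*g)^m = 1 := by
  rw [← gh_inv hg hh, hrel, inv_one]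

/-- The key dihedral classification: a minimal word `x` (w.r.t. `T = {g,h}`) such that
right-multiplying by `g` increases the minimal length has the shape `(gh)^j` or `h(gh)^j`,
and moreover its length is `< m` whenever `(gh)^m = 1`, `m ≠ 0`. -/
lemma dihedral_shape (hg : g*g=1) (hh : h*h=1) (m : ℕ) (hrel : (g*h)^m = 1)
    (x : G) (k : ℕ) (hx : HasLen {g,h} x k) (hmin : ∀ j, HasLen {g,h} x j → k ≤ j)
    (hxg : ∀ j, HasLen {g,h} (x*g) j → k < j) :
    (m ≠ 0 → k < m) ∧
      ((∃ j, k = 2*j ∧ x = (g*h)^j) ∨ (∃ j, k = 2*j+1 ∧ x = h*(g*h)^j)) := by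
  have hrel' : (h*g)^m = 1 := hg_rel hg hh hrel
  have shape : (∃ j, k = 2*j ∧ x = (g*h)^j) ∨ (∃ j, k = 2*j+1 ∧ x = h*(g*h)^j) := by
    rcases minimal_word_classify hg hh k x hx hmin with ⟨j, hk, hsh | hsh⟩ | ⟨j, hk, hsh | hsh⟩
    · exact Or.inl ⟨j, hk, hsh⟩
    · match j, hk with
      | 0, hk => exact Or.inl ⟨0, hk, by rw [hsh]; simp⟩
      | (j'+1), hk =>
        exfalso
        have e : x*g = h*(g*h)^j' := by
          rw [hsh, pow_succ, mul_assoc, mul_assoc, hg, mul_one]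
          exact (I2 j').symm
        exact absurd (hxg (2*j'+1) (e ▸ hasLen_h_pow_gh hg hh j')) (by omega)
    · exfalso
      have e : x*g = (g*h)^j := by rw [hsh, J5 hg]
      exact absurd (hxg (2*j) (e ▸ hasLen_pow_gh hg hh j)) (by omega)
    · exact Or.inr ⟨j, hk, hsh⟩
  refine ⟨?_, shape⟩
  intro hm0
  by_contra hkm
  push_neg at hkm
  rcases shape with ⟨j, hk, hsh⟩ | ⟨j, hk, hsh⟩
  · rcases le_or_gt m j with hmj | hjm
    · have e : x = (g*h)^(j-m) := by
        rw [hsh]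
        conv_lhs => rw [show j = (j-m)+m by omega]
        rw [pow_add, hrel, mul_one]
      exact absurd (hmin (2*(j-m)) (e ▸ hasLen_pow_gh hg hh (j-m))) (by omega)
    · have e : x = (h*g)^(m-j) := by
        have h1 : (g*h)^j * (g*h)^(m-j) = 1 := by
          rw [← pow_add, show j + (m-j) = m by omega, hrel]
        rw [hsh, ← gh_inv hg hh]
        exact eq_inv_of_mul_eq_one_left h1
      have h1 := hmin (2*(m-j)) (e ▸ hasLen_pow_hg hg hh (m-j))
      have hmeq : m = 2*j := by omega
      have hj1 : 1 ≤ j := by omega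
      have e2 : x*g = (h*g)^(j-1)*h := by
        rw [e, show m - j = j by omega]
        conv_lhs => rw [show j = (j-1)+1 by omega]
        rw [pow_succ, mul_assoc, mul_assoc, hg, mul_one]
      have e3 : x*g = h*(g*h)^(j-1) := by rw [e2, ← I2]
      exact absurd (hxg (2*(j-1)+1) (e3 ▸ hasLen_h_pow_gh hg hh (j-1))) (by omega)
  · have exg : x*g = (h*g)^(j+1) := by rw [hsh, I2, pow_succ, mul_assoc]
    rcases le_or_gt m (j+1) with hmj | hjm
    · have e : x*g = (h*g)^(j+1-m) := by
        rw [exg]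
        conv_lhs => rw [show j+1 = (j+1-m)+m by omega]
        rw [pow_add, hrel', mul_one]
      exact absurd (hxg (2*(j+1-m)) (e ▸ hasLen_pow_hg hg hh (j+1-m))) (by omega)
    · have e : x*g = (g*h)^(m-(j+1)) := by
        have h1 : (h*g)^(j+1) * (h*g)^(m-(j+1)) = 1 := by
          rw [← pow_add, show (j+1) + (m-(j+1)) = m by omega, hrel']
        rw [exg, ← gh_inv hh hg]
        exact eq_inv_of_mul_eq_one_left h1
      exact absurd (hxg (2*(m-(j+1))) (e ▸ hasLen_pow_gh hg hh (m-(j+1)))) (by omega)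

end Words

/-! ### Auxiliary: pairs of reflections acting on `S →₀ ℝ` -/

section Reflections
variable {ρ : W →* ((S →₀ ℝ) ≃ₗ[ℝ] (S →₀ ℝ))}
  {F : (S →₀ ℝ) →ₗ[ℝ] (S →₀ ℝ) →ₗ[ℝ] ℝ}
  {tb tc : W} {β γ : S →₀ ℝ} {a : ℝ}

open Real

lemma step_b (htb : ∀ v, ρ tb v = v - (2 * F β v) • β)
    (hββ : F β β = 1) (hβγ : F β γ = -a) (p q : ℝ) :
    ρ tb (p•β + q•γ) = (2*a*q - p)•β + q•γ := by
  rw [htb]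
  have : F β (p•β + q•γ) = p - q*a := by
    rw [map_add, map_smul, map_smul, hββ, hβγ]; simp; ring
  rw [this]
  module

lemma step_c (htc : ∀ v, ρ tc v = v - (2 * F γ v) • γ)
    (hγγ : F γ γ = 1) (hγβ : F γ β = -a) (p q : ℝ) :
    ρ tc (p•β + q•γ) = p•β + (2*a*p - q)•γ := by
  rw [htc]
  have : F γ (p•β + q•γ) = q - p*a := by
    rw [map_add, map_smul, map_smul, hγγ, hγβ]; simp; ring
  rw [this]
  module

lemma dihedral_formula (htb : ∀ v, ρ tb v = v - (2 * F β v) • β)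
    (htc : ∀ v, ρ tc v = v - (2 * F γ v) • γ)
    (hββ : F β β = 1) (hγγ : F γ γ = 1) (hβγ : F β γ = -a) (hγβ : F γ β = -a) (j : ℕ) :
    ρ ((tb*tc)^j) β = useq a (2*j+1) • β + useq a (2*j) • γ ∧
      ρ (tc*(tb*tc)^j) β = useq a (2*j+1) • β + useq a (2*j+2) • γ := by
  induction j with
  | zero =>
      constructor
      · simp
      · have h0 : ρ (tc*(tb*tc)^0) β = ρ tc ((1:ℝ)•β + (0:ℝ)•γ) := by
          norm_num
        rw [h0, step_c htc hγγ hγβ]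
        have : useq a 2 = 2*a := by rw [show 2 = 0+2 by rfl, useq_rec]; simp
        rw [show 2*0+2 = 2 by rfl, this]
        norm_num
  | succ j ih =>
      obtain ⟨ih1, ih2⟩ := ih
      have key1 : ρ ((tb*tc)^(j+1)) β
          = useq a (2*(j+1)+1) • β + useq a (2*(j+1)) • γ := by
        have e : (tb*tc)^(j+1) = tb * (tc*(tb*tc)^j) := by rw [pow_succ']; group
        rw [e, map_mul]
        show ρ tb (ρ (tc*(tb*tc)^j) β) = _
        rw [ih2, step_b htb hββ hβγ]
        have c1 : useq a (2*(j+1)+1) = 2*a*useq a (2*j+2) - useq a (2*j+1) := by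
          rw [show 2*(j+1)+1 = (2*j+1)+2 by omega, useq_rec, show 2*j+1+1 = 2*j+2 by omega]
        have c2 : useq a (2*(j+1)) = useq a (2*j+2) := by rw [show 2*(j+1) = 2*j+2 by omega]
        rw [c1, c2]
      refine ⟨key1, ?_⟩
      rw [map_mul]
      show ρ tc (ρ ((tb*tc)^(j+1)) β) = _
      rw [key1, step_c htc hγγ hγβ]
      have c3 : useq a (2*(j+1)+2) = 2*a*useq a (2*(j+1)+1) - useq a (2*(j+1)) :=
        useq_rec a _
      rw [c3]

lemma order_refl_pair_finite (htb : ∀ v, ρ tb v = v - (2 * F β v) • β)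
    (htc : ∀ v, ρ tc v = v - (2 * F γ v) • γ)
    (hββ : F β β = 1) (hγγ : F γ γ = 1) (hβγ : F β γ = -a) (hγβ : F γ β = -a)
    (hind : ∀ p q : ℝ, p•β + q•γ = 0 → p = 0 ∧ q = 0)
    {m : ℕ} (hm : 2 ≤ m) (ha : a = Real.cos (π/m)) (hrel : (tb*tc)^m = 1) :
    orderOf (tb*tc) = m := by
  rw [orderOf_eq_iff (by omega)]
  refine ⟨hrel, ?_⟩
  intro j hjm hj0 hpow
  have h1 := (dihedral_formula htb htc hββ hγγ hβγ hγβ j).1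
  rw [hpow] at h1
  have h2 : (ρ 1 : (S →₀ ℝ) ≃ₗ[ℝ] (S →₀ ℝ)) β = β := by rw [map_one]; rfl
  rw [h2] at h1
  have h3 : (useq a (2*j+1) - 1)•β + useq a (2*j)•γ = 0 := by
    have e : (useq a (2*j+1) - 1)•β + useq a (2*j)•γ
        = (useq a (2*j+1)•β + useq a (2*j)•γ) - β := by module
    rw [e, ← h1, sub_self]
  obtain ⟨h4, h5⟩ := hind _ _ h3
  subst ha
  have h6 : 2*j = m := (useq_eq_zero_iff hm (by omega) (by omega)).mp h5
  have h7 : 2*j+1 = m+1 := by omega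
  rw [h7, useq_succ_m hm] at h4
  norm_num at h4

lemma order_refl_pair_zero (htb : ∀ v, ρ tb v = v - (2 * F β v) • β)
    (htc : ∀ v, ρ tc v = v - (2 * F γ v) • γ)
    (hββ : F β β = 1) (hγγ : F γ γ = 1) (hβγ : F β γ = -a) (hγβ : F γ β = -a)
    (hind : ∀ p q : ℝ, p•β + q•γ = 0 → p = 0 ∧ q = 0)
    (ha : a = 1) : orderOf (tb*tc) = 0 := by
  rw [orderOf_eq_zero_iff']
  intro j hj0 hpow
  have h1 := (dihedral_formula htb htc hββ hγγ hβγ hγβ j).1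
  rw [hpow] at h1
  have h2 : (ρ 1 : (S →₀ ℝ) ≃ₗ[ℝ] (S →₀ ℝ)) β = β := by rw [map_one]; rfl
  rw [h2] at h1
  have h3 : (useq a (2*j+1) - 1)•β + useq a (2*j)•γ = 0 := by
    have e : (useq a (2*j+1) - 1)•β + useq a (2*j)•γ
        = (useq a (2*j+1)•β + useq a (2*j)•γ) - β := by module
    rw [e, ← h1, sub_self]
  obtain ⟨h4, h5⟩ := hind _ _ h3
  rw [ha, useq_linear] at h5
  have : (2*j : ℕ) ≠ 0 := by omega
  exact this (by exact_mod_cast h5)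

end Reflections

/-! ### Auxiliary: the bilinear form on simple roots -/

lemma bform_single (M : CoxeterMatrix S) (s t : S) :
    bform M (simpleRoot s) (simpleRoot t) = formEntry M s t := by
  have h1 : (simpleRoot s : S →₀ ℝ) = Finsupp.basisSingleOne s := by
    rw [Finsupp.coe_basisSingleOne]; rfl
  have h2 : (simpleRoot t : S →₀ ℝ) = Finsupp.basisSingleOne t := by
    rw [Finsupp.coe_basisSingleOne]; rfl
  rw [bform, h1, h2, Module.Basis.constr_basis, Module.Basis.constr_basis]

open Real in
lemma formEntry_diag (M : CoxeterMatrix S) (s : S) : formEntry M s s = 1 := by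
  rw [formEntry, M.diagonal]
  norm_num [Real.cos_pi]

/-- If `𝒳 ⊆ Φ` is almost parabolic, then, setting `m_{β,γ}` to be the order
of `r_β · r_γ` in `W`, the matrix `M_𝒳 = (m_{β,γ})` is a Coxeter matrix on `𝒳`, and the
group homomorphism from the abstract Coxeter group of `M_𝒳` to `W` determined by
`q_β ↦ r_β` is injective with image `W_𝒳 = ⟨R_𝒳⟩`; i.e. `(W_𝒳, R_𝒳)` is a Coxeter system
with Coxeter matrix `M_𝒳`. -/
theorem statement0
    (M : CoxeterMatrix S) (cs : CoxeterSystem M W)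
    (ρ : W →* ((S →₀ ℝ) ≃ₗ[ℝ] (S →₀ ℝ)))
    (hρ : ∀ (s : S) (v : S →₀ ℝ),
      ρ (cs.simple s) v = v - (2 * bform M (simpleRoot s) v) • simpleRoot s)
    (hρinj : Function.Injective ρ)
    (hρform : ∀ (w : W) (x y : S →₀ ℝ), bform M (ρ w x) (ρ w y) = bform M x y)
    (r : (S →₀ ℝ) → W)
    (hr : ∀ (w : W) (s : S), r (ρ w (simpleRoot s)) = w * cs.simple s * w⁻¹)
    (𝒳 : Set (S →₀ ℝ)) (h𝒳Φ : 𝒳 ⊆ rootSystem ρ) (hAP : IsAP ρ 𝒳) :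
    ∃ (M𝒳 : CoxeterMatrix ↥𝒳) (f : M𝒳.Group →* W),
      (∀ β γ : ↥𝒳, M𝒳 β γ = orderOf (r ↑β * r ↑γ)) ∧
      (∀ β : ↥𝒳, f (M𝒳.simple β) = r ↑β) ∧
      Function.Injective f ∧
      f.range = Subgroup.closure (r '' 𝒳) := by
  classical
  obtain ⟨hLI, hAP2⟩ := hAP
  -- the reflection in a root, via the formula
  have refl_formula : ∀ (w : W) (s : S) (v : S →₀ ℝ),
      ρ (w * cs.simple s * w⁻¹) v
        = v - (2 * bform M (ρ w (simpleRoot s)) v) • (ρ w (simpleRoot s)) := by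
    intro w s v
    have h1 : ρ (w * cs.simple s * w⁻¹) v = ρ w (ρ (cs.simple s) (ρ w⁻¹ v)) := by
      rw [map_mul, map_mul]; rfl
    have h2 : ρ w (ρ w⁻¹ v) = v := by
      have : ρ w (ρ w⁻¹ v) = ρ (w * w⁻¹) v := by rw [map_mul]; rfl
      rw [this, mul_inv_cancel, map_one]; rfl
    rw [h1, hρ s, map_sub, map_smul, h2]
    have h3 := hρform w (simpleRoot s) (ρ w⁻¹ v)
    rw [h2] at h3
    rw [h3]
  have hroot : ∀ β ∈ 𝒳, ∃ (w : W) (s : S), ρ w (simpleRoot s) = β := by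
    intro β hβ
    obtain ⟨⟨w, s⟩, hws⟩ := h𝒳Φ hβ
    exact ⟨w, s, hws⟩
  have hrefl : ∀ β ∈ 𝒳, ∀ v, ρ (r β) v = v - (2 * bform M β v) • β := by
    intro β hβ v
    obtain ⟨w, s, hws⟩ := hroot β hβ
    rw [← hws, hr, refl_formula]
  have hsq : ∀ β ∈ 𝒳, r β * r β = 1 := by
    intro β hβ
    obtain ⟨w, s, hws⟩ := hroot β hβ
    rw [← hws, hr]
    have e : (w * cs.simple s * w⁻¹) * (w * cs.simple s * w⁻¹)
        = w * (cs.simple s * cs.simple s) * w⁻¹ := by group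
    rw [e, cs.simple_mul_simple_self s, mul_one, mul_inv_cancel]
  have hdiag : ∀ β ∈ 𝒳, bform M β β = 1 := by
    intro β hβ
    obtain ⟨w, s, hws⟩ := hroot β hβ
    rw [← hws, hρform, bform_single, formEntry_diag]
  -- linear independence of pairs
  have pairLI : ∀ (b c : ↥𝒳), b ≠ c →
      ∀ p q : ℝ, p•(b:S→₀ℝ) + q•(c:S→₀ℝ) = 0 → p = 0 ∧ q = 0 := by
    intro b c hbc p q hpq
    have h1 : Finsupp.linearCombination ℝ (fun i : ↥𝒳 => (i : S →₀ ℝ))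
        (Finsupp.single b p + Finsupp.single c q) = 0 := by
      rw [map_add, Finsupp.linearCombination_single, Finsupp.linearCombination_single]
      exact hpq
    have h2 := linearIndependent_iff.mp hLI _ h1
    constructor
    · have := DFunLike.congr_fun h2 b
      simpa [Finsupp.single_apply, hbc, (Ne.symm hbc)] using this
    · have := DFunLike.congr_fun h2 c
      simpa [Finsupp.single_apply, hbc, (Ne.symm hbc)] using this
  -- the order of products of distinct reflections, and form values
  have key : ∀ b c : ↥𝒳, b ≠ c →
      orderOf (r ↑b * r ↑c) ≠ 1 ∧
      bform M (b:S→₀ℝ) (c:S→₀ℝ)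
        = -(if orderOf (r ↑b * r ↑c) = 0 then 1
            else Real.cos (Real.pi / (orderOf (r ↑b * r ↑c)))) := by
    intro b c hbc
    obtain ⟨w, s, t, hs, ht⟩ := hAP2 ↑b b.2 ↑c c.2
    have hst : s ≠ t := by
      intro hE
      exact hbc (Subtype.ext (by rw [← hs, ← ht, hE]))
    have hform_bc : bform M (b:S→₀ℝ) (c:S→₀ℝ) = formEntry M s t := by
      rw [← hs, ← ht, hρform, bform_single]
    have hform_cb : bform M (c:S→₀ℝ) (b:S→₀ℝ) = formEntry M s t := by
      rw [← hs, ← ht, hρform, bform_single]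
      unfold formEntry
      rw [M.symmetric t s]
    have hrb : r ↑b = w * cs.simple s * w⁻¹ := by rw [← hs, hr]
    have hrc : r ↑c = w * cs.simple t * w⁻¹ := by rw [← ht, hr]
    have hrel : (r ↑b * r ↑c)^(M s t) = 1 := by
      rw [hrb, hrc]
      have e : (w * cs.simple s * w⁻¹) * (w * cs.simple t * w⁻¹)
          = w * (cs.simple s * cs.simple t) * w⁻¹ := by group
      rw [e, conj_pow, cs.simple_mul_simple_pow s t, mul_one, mul_inv_cancel]
    have htb : ∀ v, ρ (r ↑b) v = v - (2 * bform M ↑b v) • (↑b : S→₀ℝ) := hrefl _ b.2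
    have htc : ∀ v, ρ (r ↑c) v = v - (2 * bform M ↑c v) • (↑c : S→₀ℝ) := hrefl _ c.2
    by_cases hM0 : M s t = 0
    · have haE : formEntry M s t = -1 := by rw [formEntry, if_pos hM0]
      have horder : orderOf (r ↑b * r ↑c) = 0 :=
        order_refl_pair_zero (a := 1) htb htc (hdiag _ b.2) (hdiag _ c.2)
          (by rw [hform_bc, haE]) (by rw [hform_cb, haE])
          (pairLI b c hbc) rfl
      rw [horder, hform_bc, haE]
      norm_num
    · have h2m : 2 ≤ M s t := by
        have := M.off_diagonal s t hst
        omega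
      have haE : formEntry M s t = -Real.cos (Real.pi / (M s t)) := by
        rw [formEntry, if_neg hM0]
      have horder : orderOf (r ↑b * r ↑c) = M s t :=
        order_refl_pair_finite (a := Real.cos (Real.pi / (M s t))) htb htc
          (hdiag _ b.2) (hdiag _ c.2)
          (by rw [hform_bc, haE]) (by rw [hform_cb, haE])
          (pairLI b c hbc) h2m rfl hrel
      rw [horder, hform_bc, haE, if_neg hM0]
      refine ⟨by omega, rfl⟩
  -- the Coxeter matrix
  set N : CoxeterMatrix ↥𝒳 := {
    M := Matrix.of fun b c : ↥𝒳 => orderOf (r ↑b * r ↑c),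
    isSymm := by
      unfold Matrix.IsSymm
      ext b c
      show orderOf (r ↑c * r ↑b) = orderOf (r ↑b * r ↑c)
      exact SemiconjBy.orderOf_eq (r ↑b) (by unfold SemiconjBy; group),
    diagonal := fun b => by
      show orderOf (r ↑b * r ↑b) = 1
      rw [hsq _ b.2, orderOf_one],
    off_diagonal := fun b c hbc => (key b c hbc).1 } with hN
  have hNapply : ∀ b c : ↥𝒳, N b c = orderOf (r ↑b * r ↑c) := fun b c => rfl
  set csN := N.toCoxeterSystem with hcsN
  have liftable : CoxeterMatrix.IsLiftable N (fun b : ↥𝒳 => r ↑b) := by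
    intro b c
    exact pow_orderOf_eq_one _
  set f : N.Group →* W := csN.lift ⟨fun b : ↥𝒳 => r ↑b, liftable⟩ with hf
  have hsimple_eq : ∀ b : ↥𝒳, csN.simple b = N.simple b := fun b => rfl
  have hfsimple : ∀ b : ↥𝒳, f (N.simple b) = r ↑b := by
    intro b
    rw [← hsimple_eq]
    exact csN.lift_apply_simple liftable b
  -- the nonnegative cone
  set lc : (↥𝒳 →₀ ℝ) →ₗ[ℝ] (S →₀ ℝ) :=
    Finsupp.linearCombination ℝ (fun i : ↥𝒳 => (i : S →₀ ℝ)) with hlc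
  set InC : (S →₀ ℝ) → Prop :=
    fun v => ∃ cf : ↥𝒳 →₀ ℝ, (∀ i, 0 ≤ cf i) ∧ lc cf = v with hInC
  have InC_base : ∀ b : ↥𝒳, InC (b : S →₀ ℝ) := by
    intro b
    refine ⟨Finsupp.single b 1, ?_, ?_⟩
    · intro i
      rw [Finsupp.single_apply]
      split <;> norm_num
    · rw [hlc, Finsupp.linearCombination_single, one_smul]
  have InC_combo : ∀ (p q : ℝ) (v v' : S →₀ ℝ), 0 ≤ p → 0 ≤ q → InC v → InC v' →
      InC (p•v + q•v') := by
    rintro p q v v' hp hq ⟨cf1, hcf1, h1⟩ ⟨cf2, hcf2, h2⟩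
    refine ⟨p • cf1 + q • cf2, ?_, ?_⟩
    · intro i
      rw [Finsupp.add_apply, Finsupp.smul_apply, Finsupp.smul_apply, smul_eq_mul, smul_eq_mul]
      have := hcf1 i; have := hcf2 i
      positivity
    · rw [map_add, map_smul, map_smul, h1, h2]
  -- word length bound
  have hlen_word : ∀ (T : Set N.Group), (∀ y ∈ T, ∃ i, y = csN.simple i) →
      ∀ (l : List N.Group), (∀ z ∈ l, z ∈ T) → csN.length l.prod ≤ l.length := by
    intro T hT l
    induction l with
    | nil => intro _; simp
    | cons y l ih =>
        intro hmem
        have h1 : csN.length (y * l.prod) ≤ csN.length y + csN.length l.prod :=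
          csN.length_mul_le y l.prod
        obtain ⟨i, hi⟩ := hT y (hmem y (by simp))
        have h2 : csN.length y = 1 := by rw [hi]; exact csN.length_simple i
        have h3 := ih (fun z hz => hmem z (by simp [hz]))
        simp only [List.prod_cons, List.length_cons]
        omega
  -- ** The positivity theorem **
  have pos : ∀ n (u : N.Group) (b : ↥𝒳), csN.length u = n →
      csN.length (u * csN.simple b) > n → InC (ρ (f u) (b : S →₀ ℝ)) := by
    intro n
    induction n using Nat.strong_induction_on with
    | _ n IH =>
    intro u b hlen hgt
    rcases Nat.eq_zero_or_pos n with hn0 | hnpos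
    · subst hn0
      have hu1 : u = 1 := csN.length_eq_zero_iff.mp hlen
      subst hu1
      have h1 : ρ (f 1) (b:S→₀ℝ) = (b:S→₀ℝ) := by rw [map_one, map_one]; rfl
      rw [h1]
      exact InC_base b
    · have hu1 : u ≠ 1 := by
        intro hE
        rw [hE] at hlen
        rw [csN.length_one] at hlen
        omega
      obtain ⟨c, hcdesc⟩ := csN.exists_rightDescent_of_ne_one hu1
      have hcdesc' : csN.length (u * csN.simple c) < csN.length u := hcdesc
      have hbc : b ≠ c := by
        intro hE
        subst hE
        omega
      set g := csN.simple b with hgdef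
      set h := csN.simple c with hhdef
      have hgg : g*g = 1 := csN.simple_mul_simple_self b
      have hhh : h*h = 1 := csN.simple_mul_simple_self c
      have hmemg : g ∈ ({g,h} : Set N.Group) := by simp
      have hmemh : h ∈ ({g,h} : Set N.Group) := by simp
      have hTword : ∀ (y : N.Group) (j : ℕ), HasLen {g,h} y j → csN.length y ≤ j := by
        rintro y j ⟨l, hl, hprod, hlenl⟩
        rw [← hprod, ← hlenl]
        refine hlen_word {g,h} ?_ l hl
        intro z hz
        have : z = g ∨ z = h := by simpa using hz
        rcases this with rfl | rfl
        exacts [⟨b, hgdef⟩, ⟨c, hhdef⟩]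
      set Pd : ℕ → Prop := fun d => ∃ v x k, v * x = u ∧ HasLen {g,h} x k ∧
        csN.length u = csN.length v + k ∧ csN.length v = d with hPddef
      have hex : ∃ d, Pd d := ⟨csN.length u, u, 1, 0, mul_one u, hasLen_one _, by simp, rfl⟩
      obtain ⟨v, x, k, hvx, hxk, hsum, hvd⟩ := Nat.find_spec hex
      have hdmin : ∀ d', Pd d' → Nat.find hex ≤ d' := fun d' hd' => Nat.find_min' hex hd'
      have hulen : csN.length (u * h) + 1 = csN.length u := by
        rcases csN.length_mul_simple u c with hE | hE <;> rw [← hhdef] at hE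
        · omega
        · exact hE
      have hvlt : csN.length v < n := by
        have h1 : Pd (csN.length (u*h)) := ⟨u*h, h, 1,
          by rw [mul_assoc, hhh, mul_one],
          ⟨[h], by simp, by simp, rfl⟩, by omega, rfl⟩
        have := hdmin _ h1
        omega
      have hvgup : csN.length (v * g) = csN.length v + 1 := by
        rcases csN.length_mul_simple v b with hE | hE <;> rw [← hgdef] at hE
        · exact hE
        · exfalso
          have h1 : Pd (csN.length (v*g)) := ⟨v*g, g*x, k+1,
            by rw [mul_assoc, ← mul_assoc g g x, hgg, one_mul, hvx],
            hasLen_mul_left hxk hmemg, by omega, rfl⟩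
          have := hdmin _ h1
          omega
      have hvhup : csN.length (v * h) = csN.length v + 1 := by
        rcases csN.length_mul_simple v c with hE | hE <;> rw [← hhdef] at hE
        · exact hE
        · exfalso
          have h1 : Pd (csN.length (v*h)) := ⟨v*h, h*x, k+1,
            by rw [mul_assoc, ← mul_assoc h h x, hhh, one_mul, hvx],
            hasLen_mul_left hxk hmemh, by omega, rfl⟩
          have := hdmin _ h1
          omega
      have hminx : ∀ j, HasLen {g,h} x j → k ≤ j := by
        intro j hj
        have h1 : csN.length u ≤ csN.length v + j := by
          rw [← hvx]
          exact (csN.length_mul_le v x).trans (by have := hTword x j hj; omega)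
        omega
      have hxgmin : ∀ j, HasLen {g,h} (x*g) j → k < j := by
        intro j hj
        have h1 : csN.length (u * g) ≤ csN.length v + j := by
          rw [← hvx, mul_assoc]
          exact (csN.length_mul_le v (x*g)).trans (by have := hTword (x*g) j hj; omega)
        omega
      have hrelN : (g*h)^(N b c) = 1 := csN.simple_mul_simple_pow b c
      obtain ⟨hkm, hshape⟩ := dihedral_shape hgg hhh (N b c) hrelN x k hxk hminx hxgmin
      set a : ℝ := if N b c = 0 then 1 else Real.cos (Real.pi / (N b c)) with hadef
      have hβγ : bform M (b:S→₀ℝ) (c:S→₀ℝ) = -a := (key b c hbc).2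
      have hγβ : bform M (c:S→₀ℝ) (b:S→₀ℝ) = -a := by
        have h1 := (key c b hbc.symm).2
        have h2 : orderOf (r ↑c * r ↑b) = orderOf (r ↑b * r ↑c) :=
          SemiconjBy.orderOf_eq (r ↑b) (by unfold SemiconjBy; group)
        rw [h1, h2, hadef]
        rfl
      have htb : ∀ v', ρ (r ↑b) v' = v' - (2 * bform M ↑b v') • (↑b:S→₀ℝ) := hrefl _ b.2
      have htc : ∀ v', ρ (r ↑c) v' = v' - (2 * bform M ↑c v') • (↑c:S→₀ℝ) := hrefl _ c.2
      have hform := dihedral_formula htb htc (hdiag _ b.2) (hdiag _ c.2) hβγ hγβ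
      have hcoef : ∀ i, i ≤ k+1 → 0 ≤ useq a i := by
        intro i hi
        by_cases hz : N b c = 0
        · rw [hadef, if_pos hz, useq_linear]
          positivity
        · have h2m : 2 ≤ N b c := by
            have h1 : N b c ≠ 1 := (key b c hbc).1
            omega
          rw [hadef, if_neg hz]
          exact useq_nonneg h2m (by have := hkm hz; omega)
      have hfg : f g = r ↑b := hfsimple b
      have hfh : f h = r ↑c := hfsimple c
      have main : ∃ lam mu : ℝ, 0 ≤ lam ∧ 0 ≤ mu ∧
          ρ (f x) (b:S→₀ℝ) = lam • (b:S→₀ℝ) + mu • (c:S→₀ℝ) := by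
        rcases hshape with ⟨j, hkj, hxe⟩ | ⟨j, hkj, hxe⟩
        · refine ⟨useq a (2*j+1), useq a (2*j), hcoef _ (by omega), hcoef _ (by omega), ?_⟩
          have he : f x = (r ↑b * r ↑c)^j := by rw [hxe, map_pow, map_mul, hfg, hfh]
          rw [he]
          exact (hform j).1
        · refine ⟨useq a (2*j+1), useq a (2*j+2), hcoef _ (by omega), hcoef _ (by omega), ?_⟩
          have he : f x = r ↑c * (r ↑b * r ↑c)^j := by
            rw [hxe, map_mul, map_pow, map_mul, hfg, hfh]
          rw [he]
          exact (hform j).2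
      obtain ⟨lam, mu, hlam, hmu, hfx⟩ := main
      have hufv : ρ (f u) (b:S→₀ℝ) = lam • (ρ (f v) (↑b:S→₀ℝ)) + mu • (ρ (f v) (↑c:S→₀ℝ)) := by
        rw [← hvx, map_mul, map_mul]
        show ρ (f v) (ρ (f x) ↑b) = _
        rw [hfx, map_add, map_smul, map_smul]
      have hIHb := IH (csN.length v) (by omega) v b rfl (by rw [← hgdef]; omega)
      have hIHc := IH (csN.length v) (by omega) v c rfl (by rw [← hhdef]; omega)
      rw [hufv]
      exact InC_combo lam mu _ _ hlam hmu hIHb hIHc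
  -- ** Injectivity **
  have hinj : Function.Injective f := by
    rw [injective_iff_map_eq_one]
    intro u hu1
    by_contra hne
    obtain ⟨b, hb⟩ := csN.exists_rightDescent_of_ne_one hne
    have hb' : csN.length (u * csN.simple b) < csN.length u := hb
    set u' := u * csN.simple b with hu'def
    have h1 : csN.length (u' * csN.simple b) > csN.length u' := by
      have he : u' * csN.simple b = u := by
        rw [hu'def, mul_assoc, csN.simple_mul_simple_self, mul_one]
      rw [he]
      omega
    have h2 := pos (csN.length u') u' b rfl h1
    have h3 : f u' = r ↑b := by
      rw [hu'def, map_mul, hu1, one_mul]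
      exact hfsimple b
    have h4 : ρ (f u') (b:S→₀ℝ) = -(b:S→₀ℝ) := by
      rw [h3, hrefl _ b.2, hdiag _ b.2]
      module
    rw [h4] at h2
    obtain ⟨cf, hcf, hlceq⟩ := h2
    have h5 : lc (cf + Finsupp.single b 1) = 0 := by
      rw [map_add, hlceq, hlc, Finsupp.linearCombination_single, one_smul]
      exact neg_add_cancel _
    have h6 : cf + Finsupp.single b 1 = 0 := linearIndependent_iff.mp hLI _ h5
    have h7 := DFunLike.congr_fun h6 b
    rw [Finsupp.add_apply, Finsupp.single_eq_same, Finsupp.zero_apply] at h7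
    have := hcf b
    linarith
  -- ** Range **
  have hrange : f.range = Subgroup.closure (r '' 𝒳) := by
    rw [MonoidHom.range_eq_map, ← csN.subgroup_closure_range_simple, MonoidHom.map_closure]
    congr 1
    rw [← Set.range_comp]
    have he : (⇑f ∘ csN.simple) = fun b : ↥𝒳 => r ↑b := by
      funext b
      exact hfsimple b
    rw [he, Set.image_eq_range]
  exact ⟨N, f, hNapply, hfsimple, hinj, hrange⟩
end
end

section
/- Let Γ be of spherical type and X ⊆ S. Then ⟨α_s, o − o_X⟩ = 0 for every s ∈ X, and consequently the translation of V by the vector o − o_X commutes with the action of every element of W_X: w(v + (o − o_X)) = w(v) + (o − o_X) for all w ∈ W_X and v ∈ V. In particular this translation sends w(o_X) to w(o) for every w ∈ W_X, and hence maps C[X] = conv{w(o_X) : w ∈ W_X} isometrically onto the face F(id,X,S) = conv{w(o) : w ∈ W_X} of C[S]. -/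
/-!
Context: `(W, S)` is a Coxeter system for the Coxeter matrix `M` (Mathlib's convention:
the entry `0` encodes `∞`).  `V = ⊕_{s ∈ S} ℝ·α_s` is realized as `S →₀ ℝ` with
`α_s = simpleRoot s`, equipped with the canonical symmetric bilinear form `bform M`.
The canonical faithful form-preserving representation `ρ : W →* GL(V)` and the map
`β ↦ r_β` assigning to each root its reflection are given as data, characterized by
the usual formulas (`hρ`, `hρinj`, `hρform`, `hr` below).
-/

noncomputable section

open scoped Real Pointwise

variable {S W : Type*}

variable [Group W]

lemma bform_single_single (M : CoxeterMatrix S) (s t : S) :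
    bform M (Finsupp.single s (1:ℝ)) (Finsupp.single t 1) = formEntry M s t := by
  have h1 : (Finsupp.single s (1:ℝ)) = Finsupp.basisSingleOne s := rfl
  have h2 : (Finsupp.single t (1:ℝ)) = Finsupp.basisSingleOne t := rfl
  rw [bform, h1, h2, Module.Basis.constr_basis, Module.Basis.constr_basis]

lemma bform_comm (M : CoxeterMatrix S) (x y : S →₀ ℝ) : bform M x y = bform M y x := by
  induction x using Finsupp.induction_linear with
  | zero => simp
  | add f g hf hg => simp [map_add, LinearMap.add_apply, hf, hg]
  | single s a =>
    induction y using Finsupp.induction_linear with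
    | zero => simp
    | add f g hf hg =>
      simp only [map_add, LinearMap.add_apply] at *
      rw [hf, hg]
    | single t b =>
      have ha : Finsupp.single s a = a • Finsupp.single s (1:ℝ) := by
        simp [Finsupp.smul_single]
      have hb : Finsupp.single t b = b • Finsupp.single t (1:ℝ) := by
        simp [Finsupp.smul_single]
      rw [ha, hb]
      simp only [map_smul, LinearMap.smul_apply, smul_eq_mul, bform_single_single]
      have : formEntry M s t = formEntry M t s := by
        unfold formEntry; rw [M.symmetric s t]
      rw [this]; ring

/-- Let `Γ` be of spherical type (`W` finite) and `X ⊆ S`.  Then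
`⟨α_s, o − o_X⟩ = 0` for every `s ∈ X`; consequently the translation by `o − o_X` commutes
with the action of every `w ∈ W_X`, sends `w (o_X)` to `w (o)` for every `w ∈ W_X`, and maps
`C[X] = conv{w (o_X) : w ∈ W_X}` isometrically onto the face
`F(id, X, S) = conv{w (o) : w ∈ W_X}` of `C[S]`.  (Here `o` is characterized by
`⟨o, α_t⟩ = 1` for all `t ∈ S`, and `o_X` by `o_X ∈ span Π_X` and `⟨o_X, α_t⟩ = 1` for all
`t ∈ X`.) -/
theorem statement10
    (M : CoxeterMatrix S) (cs : CoxeterSystem M W) [Finite W]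
    (ρ : W →* ((S →₀ ℝ) ≃ₗ[ℝ] (S →₀ ℝ)))
    (hρ : ∀ (s : S) (v : S →₀ ℝ),
      ρ (cs.simple s) v = v - (2 * bform M (simpleRoot s) v) • simpleRoot s)
    (hρinj : Function.Injective ρ)
    (hρform : ∀ (w : W) (x y : S →₀ ℝ), bform M (ρ w x) (ρ w y) = bform M x y)
    (o : S →₀ ℝ) (ho : ∀ t : S, bform M o (simpleRoot t) = 1)
    (X : Set S)
    (oX : S →₀ ℝ) (hoXspan : oX ∈ Submodule.span ℝ (simpleRoot '' X))
    (hoX : ∀ t ∈ X, bform M oX (simpleRoot t) = 1) :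
    (∀ s ∈ X, bform M (simpleRoot s) (o - oX) = 0) ∧
    (∀ w ∈ Subgroup.closure (cs.simple '' X), ∀ v : S →₀ ℝ,
      ρ w (v + (o - oX)) = ρ w v + (o - oX)) ∧
    (∀ w ∈ Subgroup.closure (cs.simple '' X), ρ w oX + (o - oX) = ρ w o) ∧
    (fun v : S →₀ ℝ => v + (o - oX)) ''
        (convexHull ℝ ((fun w : W => ρ w oX) ''
          ((Subgroup.closure (cs.simple '' X) : Set W)))) =
      convexHull ℝ ((fun w : W => ρ w o) ''
        ((Subgroup.closure (cs.simple '' X) : Set W))) := by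
  set d := o - oX with hd
  have h1 : ∀ s ∈ X, bform M (simpleRoot s) d = 0 := by
    intro s hs
    have := ho s
    have h2 := hoX s hs
    rw [hd, map_sub, bform_comm M (simpleRoot s) o, bform_comm M (simpleRoot s) oX,
      this, h2]
    ring
  have hfix : ∀ w ∈ Subgroup.closure (cs.simple '' X), ρ w d = d := by
    intro w hw
    induction hw using Subgroup.closure_induction with
    | mem x hx =>
      obtain ⟨s, hs, rfl⟩ := hx
      rw [hρ s d, h1 s hs]
      simp
    | one => simp
    | mul a b ha hb iha ihb =>
      rw [map_mul]
      show ρ a (ρ b d) = d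
      rw [ihb, iha]
    | inv a ha iha =>
      have : ρ a⁻¹ (ρ a d) = d := by
        show (ρ a⁻¹ * ρ a) d = d
        rw [← map_mul, inv_mul_cancel]; simp
      rw [iha] at this
      exact this
  have h2 : ∀ w ∈ Subgroup.closure (cs.simple '' X), ∀ v : S →₀ ℝ,
      ρ w (v + d) = ρ w v + d := by
    intro w hw v
    rw [map_add, hfix w hw]
  have h3 : ∀ w ∈ Subgroup.closure (cs.simple '' X), ρ w oX + d = ρ w o := by
    intro w hw
    have : o = oX + d := by rw [hd]; abel
    rw [this, map_add, hfix w hw]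
  refine ⟨h1, h2, h3, ?_⟩
  have htr : (fun v : S →₀ ℝ => v + d) = fun v => d +ᵥ v := by
    funext v; simp [add_comm]
  rw [htr]
  rw [Set.image_vadd, ← convexHull_vadd, ← Set.image_vadd, Set.image_image]
  congr 1
  apply Set.image_congr
  intro w hw
  have := h3 w hw
  simpa [add_comm] using this
end
end
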